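/- For every m ∈ ℕ, the vector (m,m)‾ lies in the ℂ-linear span of {(1,1)‾, (2,2)‾, …, (n,n)‾} in ℂ^{Λ_{2,n}}. Explicitly, (m,m)‾ = Σ_{j=1}^{n} C(m,j) · v_j, where v_j := Σ_{i=1}^{j} (−1)^{j−i} C(j,i) · (i,i)‾. -/

import Mathlib

open Finset

/-- `Λ_{2,n}`: pairs `α ∈ ℕ²` with `1 ≤ α₁ + α₂ ≤ n`. -/
def Lam2 (n : ℕ) : Finset (ℕ × ℕ) :=
  ((range (n+1)) ×ˢ (range (n+1))).filter (fun α => 1 ≤ α.1 + α.2 ∧ α.1 + α.2 ≤ n)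

/-- `v̄ ∈ ℂ^{Λ_{2,n}}`, with `α`-coordinate `C(v₁,α₁)·C(v₂,α₂)`. -/
noncomputable def vbar (n : ℕ) (v : ℕ × ℕ) : (Lam2 n) → ℂ :=
  fun α => ((v.1.choose α.1.1 * v.2.choose α.1.2 : ℕ) : ℂ)

/-- `Λ_{3,n}`: triples `β ∈ ℕ³` with `1 ≤ β₁ + β₂ + β₃ ≤ n`. -/
def Lam3 (n : ℕ) : Finset (ℕ × ℕ × ℕ) :=
  ((range (n+1)) ×ˢ (range (n+1)) ×ˢ (range (n+1))).filter
    (fun β => 1 ≤ β.1 + β.2.1 + β.2.2 ∧ β.1 + β.2.1 + β.2.2 ≤ n)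

/-- The linear map `A_n : ℕ³ → ℕ²` with matrix rows `(1,1,n)` and `(0,1,n+1)`. -/
def Amap (n : ℕ) (β : ℕ × ℕ × ℕ) : ℕ × ℕ :=
  (β.1 + β.2.1 + n * β.2.2, β.2.1 + (n+1) * β.2.2)

/-- `c_β = Σ_{γ ≤ β} (−1)^{|β−γ|} C(β,γ) (A_nγ)‾`. -/
noncomputable def cvec (n : ℕ) (β : ℕ × ℕ × ℕ) : (Lam2 n) → ℂ :=
  ∑ γ ∈ (range (β.1+1)) ×ˢ (range (β.2.1+1)) ×ˢ (range (β.2.2+1)),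
    (((-1 : ℂ) ^ ((β.1 + β.2.1 + β.2.2) - (γ.1 + γ.2.1 + γ.2.2))) *
      ((β.1.choose γ.1 * β.2.1.choose γ.2.1 * β.2.2.choose γ.2.2 : ℕ) : ℂ)) •
      vbar n (Amap n γ)

/-- `J ∈ S_{A_n}`: `J ⊆ Λ_{3,n}`, `|J| = λ_{2,n}`, `det L^c_J ≠ 0`. -/
def memSA (n : ℕ) (J : Finset (ℕ × ℕ × ℕ)) : Prop :=
  J ⊆ Lam3 n ∧ J.card = (Lam2 n).card ∧
    ∀ e : (Lam2 n) ≃ J,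
      (Matrix.of fun i j : (Lam2 n) => cvec n (e i).1 j).det ≠ 0

/-- `m_J = Σ_{β ∈ J} A_nβ`. -/
def mJ (n : ℕ) (J : Finset (ℕ × ℕ × ℕ)) : ℕ × ℕ := ∑ β ∈ J, Amap n β

/-- `f_k(v) = k·v₁ + (1−k)·v₂`. -/
def fk (k : ℕ) (v : ℕ × ℕ) : ℤ := (k : ℤ) * v.1 + (1 - (k : ℤ)) * v.2

/-- Data of a sequence `η = (z, d₀, d₁, …, d_r)`. -/
structure OmegaData where
  r : ℕ
  z : Bool
  d : ℕ → ℕ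

/-- `η ∈ Ω`: `d₀ = 0`, `d_i ≥ 1` for `1 ≤ i ≤ r` (and `d_i = 0` beyond `r`),
and `d₀ + ⋯ + d_r = n`. -/
def OmegaData.IsOmega (n : ℕ) (η : OmegaData) : Prop :=
  η.d 0 = 0 ∧ (∀ i, 1 ≤ i → i ≤ η.r → 1 ≤ η.d i) ∧
  (∀ i, η.r < i → η.d i = 0) ∧
  (∑ i ∈ range (η.r + 1), η.d i) = n

/-- The unique `t` with `Σ_{i=0}^{t−1} d_i < j ≤ Σ_{i=0}^{t} d_i`. -/
noncomputable def tIdx (η : OmegaData) (j : ℕ) : ℕ :=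
  sInf {t | j ≤ ∑ i ∈ range (t+1), η.d i}

/-- The vector `v_{j,η} ∈ ℕ²`. -/
noncomputable def vvec (η : OmegaData) (j : ℕ) : ℕ × ℕ :=
  let t := tIdx η j
  let c := j - ∑ i ∈ range t, η.d i
  let a := (∑ i ∈ range t, if (Odd i ↔ Odd t) then η.d i else 0) + c
  if (η.z = true) ↔ Odd t then (a, 0) else (0, a)

/-- `T_{j,η}` for `1 ≤ j ≤ n`, and `T_{0,η} = {(1,1),…,(n,n)}`. -/
noncomputable def Tj (n : ℕ) (η : OmegaData) (j : ℕ) : Finset (ℕ × ℕ) :=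
  if j = 0 then (range n).image (fun q => (q+1, q+1))
  else (range (n - j + 1)).image (fun p => vvec η j + (p, p))

/-- `T_η = ⋃_{j=0}^{n} T_{j,η}`. -/
noncomputable def Tset (n : ℕ) (η : OmegaData) : Finset (ℕ × ℕ) :=
  (range (n+1)).biUnion (fun j => Tj n η j)

/-- `r_{i,η} = n·π₂(v_{i,η})`. -/
noncomputable def rshift (n : ℕ) (η : OmegaData) (i : ℕ) : ℕ := n * (vvec η i).2

/-- `T'_η = T_{0,η} ∪ ⋃_{i=1}^{n} (T_{i,η} + r_{i,η})`. -/
noncomputable def Tset' (n : ℕ) (η : OmegaData) : Finset (ℕ × ℕ) :=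
  Tj n η 0 ∪ (Finset.Icc 1 n).biUnion
    (fun i => (Tj n η i).image (fun v => v + (rshift n η i, rshift n η i)))

/-- `J_η`: the (unique) subset of `Λ_{3,n}` with `A_n(J_η) = T'_η`. -/
noncomputable def Jset (n : ℕ) (η : OmegaData) : Finset (ℕ × ℕ × ℕ) :=
  (Lam3 n).filter (fun β => Amap n β ∈ Tset' n η)

/-- `z_k = 1` iff `f_k((1,0)) ≤ f_k((n,n+1))`. -/
def zk (n k : ℕ) : Bool := decide (fk k (1, 0) ≤ fk k (n, n+1))

/-- `t_l` in the recursive definition of `η_k`, where `O`, `E` are the odd- and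
even-indexed partial sums `Σ_{j<l, j odd} d_{k,j}` and `Σ_{j<l, j even} d_{k,j}`. -/
noncomputable def tval (n k : ℕ) (l O E : ℕ) : ℕ :=
  let w := (if Odd l then E else O) + 1
  if ((zk n k = true) ↔ Odd l) then
    sSup {m : ℕ | (m : ℤ) * fk k (1, 0) ≤ fk k (w * n, w * (n+1))}
  else
    sSup {m : ℕ | (m : ℤ) * fk k (n, n+1) ≤ fk k (w, 0)}

/-- The pair `(Σ_{j≤l, j odd} d_{k,j}, Σ_{j≤l, j even} d_{k,j})` of the recursion
defining `η_k`. -/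
noncomputable def oeSums (n k : ℕ) : ℕ → ℕ × ℕ
  | 0 => (0, 0)
  | l + 1 =>
    let p := oeSums n k l
    let O := p.1
    let E := p.2
    let S := O + E
    let dnext := if S < n then
        min (n - S) (tval n k (l+1) O E - (if Odd (l+1) then O else E))
      else 0
    if Odd (l+1) then (O + dnext, E) else (O, E + dnext)

/-- `d_{k,l}`. -/
noncomputable def dk (n k : ℕ) : ℕ → ℕ
  | 0 => 0
  | l + 1 =>
    let p := oeSums n k l
    let O := p.1
    let E := p.2
    let S := O + E
    if S < n then
      min (n - S) (tval n k (l+1) O E - (if Odd (l+1) then O else E))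
    else 0

/-- `η_k = (z_k, d_{k,0}, …, d_{k,r})`, where `r` is the first index with
`Σ_{j=0}^{r} d_{k,j} = n`. -/
noncomputable def etak (n k : ℕ) : OmegaData :=
  { r := sInf {r | ∑ j ∈ range (r+1), dk n k j = n},
    z := zk n k,
    d := dk n k }


/-- Total trinomial revision. -/
lemma tri (x a t : ℕ) : x.choose (a+t) * (a+t).choose a = x.choose a * (x-a).choose t := by
  rcases le_or_gt (a+t) x with h | h
  · have := Nat.choose_mul (n := x) (k := a+t) (s := a) (Nat.le_add_right a t)
    simpa using this
  · rw [Nat.choose_eq_zero_of_lt h, zero_mul]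
    rcases le_or_gt a x with h2 | h2
    · rw [Nat.choose_eq_zero_of_lt (show x - a < t by omega), mul_zero]
    · rw [Nat.choose_eq_zero_of_lt h2, zero_mul]

lemma alt_sum (k : ℕ) :
    ∑ t ∈ range (k+1), (-1:ℂ)^(k-t) * (k.choose t) = if k = 0 then 1 else 0 := by
  have h := Int.alternating_sum_range_choose (n := k)
  have h2 : ((∑ i ∈ range (k+1), (-1:ℤ)^i * k.choose i : ℤ) : ℂ)
      = ((if k = 0 then 1 else 0 : ℤ) : ℂ) := by rw [h]
  push_cast at h2
  rw [← h2, ← Finset.sum_range_reflect]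
  apply Finset.sum_congr rfl
  intro j hj
  simp only [Finset.mem_range] at hj
  have hj' : j ≤ k := by omega
  have e1 : k + 1 - 1 - j = k - j := by omega
  have e2 : k - (k - j) = j := by omega
  rw [e1, e2, Nat.choose_symm hj']

lemma lemA (j s : ℕ) :
    ∑ i ∈ range (j+1), (-1:ℂ)^(j-i) * (j.choose i) * (i.choose s)
      = if j = s then 1 else 0 := by
  rcases le_or_gt s j with hs | hs
  · have hsplit : ∑ i ∈ range (j+1), (-1:ℂ)^(j-i) * (j.choose i) * (i.choose s)
        = ∑ i ∈ Ico s (j+1), (-1:ℂ)^(j-i) * (j.choose i) * (i.choose s) := by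
      rw [range_eq_Ico, ← Finset.sum_Ico_consecutive _ (Nat.zero_le s) (by omega)]
      have hz : ∑ i ∈ Ico 0 s, (-1:ℂ)^(j-i) * (j.choose i) * (i.choose s) = 0 := by
        apply Finset.sum_eq_zero
        intro i hi
        simp only [Finset.mem_Ico] at hi
        rw [Nat.choose_eq_zero_of_lt hi.2]
        simp
      rw [hz, zero_add]
    rw [hsplit, Finset.sum_Ico_eq_sum_range]
    have hr : j + 1 - s = (j - s) + 1 := by omega
    rw [hr]
    have hterm : ∀ t ∈ range ((j-s)+1),
        (-1:ℂ)^(j-(s+t)) * (j.choose (s+t)) * ((s+t).choose s)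
          = (j.choose s : ℂ) * ((-1:ℂ)^((j-s)-t) * ((j-s).choose t)) := by
      intro t ht
      have h1 : j - (s + t) = (j - s) - t := by omega
      have h2 : (j.choose (s+t) * (s+t).choose s : ℕ)
          = (j.choose s * (j-s).choose t : ℕ) := tri j s t
      have h2' : ((j.choose (s+t) : ℂ)) * ((s+t).choose s : ℂ)
          = (j.choose s : ℂ) * ((j-s).choose t : ℂ) := by exact_mod_cast h2
      rw [h1, mul_assoc, h2']
      ring
    rw [Finset.sum_congr rfl hterm, ← Finset.mul_sum, alt_sum]
    by_cases h : j = s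
    · simp [h]
    · have : j - s ≠ 0 := by omega
      simp [h, this]
  · rw [if_neg (by omega)]
    apply Finset.sum_eq_zero
    intro i hi
    simp only [Finset.mem_range] at hi
    rw [Nat.choose_eq_zero_of_lt (show i < s by omega)]
    simp

lemma lemB (x a b : ℕ) :
    x.choose a * x.choose b
      = ∑ s ∈ range (a+b+1), s.choose a * a.choose (a+b-s) * x.choose s := by
  by_cases hax : a ≤ x
  · rw [range_eq_Ico, ← Finset.sum_Ico_consecutive _ (Nat.zero_le a) (by omega)]
    have hz : ∑ s ∈ Ico 0 a, s.choose a * a.choose (a+b-s) * x.choose s = 0 := by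
      apply Finset.sum_eq_zero
      intro s hs
      simp only [Finset.mem_Ico] at hs
      rw [Nat.choose_eq_zero_of_lt hs.2]
      simp
    rw [hz, zero_add, Finset.sum_Ico_eq_sum_range]
    have hr : a + b + 1 - a = b + 1 := by omega
    rw [hr]
    have hterm : ∀ t ∈ range (b+1),
        (a+t).choose a * a.choose (a+b-(a+t)) * x.choose (a+t)
          = x.choose a * ((x-a).choose t * a.choose (b-t)) := by
      intro t ht
      have h1 : a + b - (a + t) = b - t := by omega
      have h2 : x.choose (a+t) * (a+t).choose a = x.choose a * (x-a).choose t := tri x a t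
      rw [h1]
      calc (a+t).choose a * a.choose (b-t) * x.choose (a+t)
          = (x.choose (a+t) * (a+t).choose a) * a.choose (b-t) := by ring
        _ = (x.choose a * (x-a).choose t) * a.choose (b-t) := by rw [h2]
        _ = x.choose a * ((x-a).choose t * a.choose (b-t)) := by ring
    rw [Finset.sum_congr rfl hterm, ← Finset.mul_sum]
    congr 1
    have hx : x = (x - a) + a := by omega
    conv_lhs => rw [hx]
    rw [Nat.add_choose_eq (x-a) a b, Finset.Nat.sum_antidiagonal_eq_sum_range_succ_mk]
  · push_neg at hax
    rw [Nat.choose_eq_zero_of_lt hax, zero_mul]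
    symm
    apply Finset.sum_eq_zero
    intro s hs
    rcases le_or_gt a s with h | h
    · rw [Nat.choose_eq_zero_of_lt (show x < s by omega), mul_zero]
    · rw [Nat.choose_eq_zero_of_lt h]
      simp

lemma sum_Icc_eq_range (f : ℕ → ℂ) (hf : f 0 = 0) (k : ℕ) :
    ∑ i ∈ Icc 1 k, f i = ∑ i ∈ range (k+1), f i := by
  apply Finset.sum_subset
  · intro x hx
    simp only [mem_Icc] at hx
    simp only [mem_range]
    omega
  · intro x hx hnx
    simp only [mem_range] at hx
    simp only [mem_Icc] at hnx
    have : x = 0 := by omega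
    subst this
    exact hf

lemma key (n a b m : ℕ) (h1 : 1 ≤ a + b) (h2 : a + b ≤ n) :
    ∑ j ∈ Icc 1 n, (m.choose j : ℂ) *
        ∑ i ∈ Icc 1 j, ((-1:ℂ)^(j-i) * (j.choose i)) * ((i.choose a) * (i.choose b))
      = (m.choose a) * (m.choose b) := by
  have hab0 : ((0:ℕ).choose a : ℂ) * ((0:ℕ).choose b) = 0 := by
    rcases (show 1 ≤ a ∨ 1 ≤ b by omega) with h | h
    · rw [Nat.choose_eq_zero_of_lt h]; simp
    · rw [Nat.choose_eq_zero_of_lt h]; simp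
  have hB : ∀ i : ℕ, ((i.choose a : ℂ)) * (i.choose b)
      = ∑ s ∈ range (a+b+1), (s.choose a : ℂ) * (a.choose (a+b-s)) * (i.choose s) := by
    intro i
    have := congrArg (Nat.cast : ℕ → ℂ) (lemB i a b)
    push_cast at this
    exact this
  have hinner : ∀ j, ∑ i ∈ Icc 1 j,
        ((-1:ℂ)^(j-i) * (j.choose i)) * ((i.choose a) * (i.choose b))
      = ∑ i ∈ range (j+1), ((-1:ℂ)^(j-i) * (j.choose i)) * ((i.choose a) * (i.choose b)) := by
    intro j
    apply sum_Icc_eq_range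
    rw [hab0, mul_zero]
  have hinner2 : ∀ j, ∑ i ∈ range (j+1),
        ((-1:ℂ)^(j-i) * (j.choose i)) * ((i.choose a) * (i.choose b))
      = if j ∈ range (a+b+1) then ((j.choose a : ℂ) * (a.choose (a+b-j))) else 0 := by
    intro j
    calc ∑ i ∈ range (j+1), ((-1:ℂ)^(j-i) * (j.choose i)) * ((i.choose a) * (i.choose b))
        = ∑ i ∈ range (j+1), ∑ s ∈ range (a+b+1),
            ((s.choose a : ℂ) * (a.choose (a+b-s))) * ((-1:ℂ)^(j-i) * (j.choose i) * (i.choose s)) := by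
          apply Finset.sum_congr rfl
          intro i _
          rw [hB i, Finset.mul_sum]
          apply Finset.sum_congr rfl
          intro s _
          ring
      _ = ∑ s ∈ range (a+b+1), ((s.choose a : ℂ) * (a.choose (a+b-s))) *
            ∑ i ∈ range (j+1), (-1:ℂ)^(j-i) * (j.choose i) * (i.choose s) := by
          rw [Finset.sum_comm]
          apply Finset.sum_congr rfl
          intro s _
          rw [Finset.mul_sum]
      _ = ∑ s ∈ range (a+b+1), if s = j then ((s.choose a : ℂ) * (a.choose (a+b-s))) else 0 := by
          apply Finset.sum_congr rfl
          intro s _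
          rw [lemA j s]
          by_cases h : j = s
          · subst h; simp
          · rw [if_neg h, if_neg (fun hh => h hh.symm), mul_zero]
      _ = if j ∈ range (a+b+1) then ((j.choose a : ℂ) * (a.choose (a+b-j))) else 0 :=
          Finset.sum_ite_eq' _ _ _
  calc ∑ j ∈ Icc 1 n, (m.choose j : ℂ) *
        ∑ i ∈ Icc 1 j, ((-1:ℂ)^(j-i) * (j.choose i)) * ((i.choose a) * (i.choose b))
      = ∑ j ∈ Icc 1 n, (m.choose j : ℂ) *
        ∑ i ∈ range (j+1), ((-1:ℂ)^(j-i) * (j.choose i)) * ((i.choose a) * (i.choose b)) := by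
        apply Finset.sum_congr rfl
        intro j _
        rw [hinner j]
    _ = ∑ j ∈ range (n+1), (m.choose j : ℂ) *
        ∑ i ∈ range (j+1), ((-1:ℂ)^(j-i) * (j.choose i)) * ((i.choose a) * (i.choose b)) := by
        apply sum_Icc_eq_range
        rw [Finset.sum_range_one, hab0]
        ring
    _ = ∑ j ∈ range (n+1),
          if j ∈ range (a+b+1) then (m.choose j : ℂ) * ((j.choose a : ℂ) * (a.choose (a+b-j))) else 0 := by
        apply Finset.sum_congr rfl
        intro j _
        rw [hinner2 j, mul_ite, mul_zero]
    _ = ∑ j ∈ range (n+1) ∩ range (a+b+1),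
          (m.choose j : ℂ) * ((j.choose a : ℂ) * (a.choose (a+b-j))) := Finset.sum_ite_mem _ _ _
    _ = ∑ j ∈ range (a+b+1), (m.choose j : ℂ) * ((j.choose a : ℂ) * (a.choose (a+b-j))) := by
        rw [Finset.inter_eq_right.mpr (Finset.range_subset_range.mpr (by omega))]
    _ = (m.choose a : ℂ) * (m.choose b) := by
        rw [hB m]
        apply Finset.sum_congr rfl
        intro s _
        ring

theorem stmt12 (n : ℕ) (hn : 1 ≤ n) (m : ℕ) :
    vbar n (m, m) =
      ∑ j ∈ Finset.Icc 1 n, (m.choose j : ℂ) •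
        (∑ i ∈ Finset.Icc 1 j, ((-1 : ℂ) ^ (j - i) * (j.choose i : ℂ)) • vbar n (i, i)) ∧
    vbar n (m, m) ∈
      Submodule.span ℂ {x | ∃ i : ℕ, 1 ≤ i ∧ i ≤ n ∧ x = vbar n (i, i)} := by
  have heq : vbar n (m, m) =
      ∑ j ∈ Finset.Icc 1 n, (m.choose j : ℂ) •
        (∑ i ∈ Finset.Icc 1 j, ((-1 : ℂ) ^ (j - i) * (j.choose i : ℂ)) • vbar n (i, i)) := by
    funext α
    obtain ⟨v, hv⟩ := α
    simp only [Lam2, Finset.mem_filter] at hv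
    simp only [Finset.sum_apply, Pi.smul_apply, smul_eq_mul, vbar]
    push_cast
    exact (key n v.1 v.2 m hv.2.1 hv.2.2).symm
  refine ⟨heq, ?_⟩
  rw [heq]
  apply Submodule.sum_mem
  intro j hj
  apply Submodule.smul_mem
  apply Submodule.sum_mem
  intro i hi
  apply Submodule.smul_mem
  apply Submodule.subset_span
  simp only [Finset.mem_Icc] at hi hj
  exact ⟨i, hi.1, le_trans hi.2 hj.2, rfl⟩
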